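/- Let k ≥ 3 and let Φ = (φ_1,…,φ_k) : ℂ^k → ℂ^k be an additive map that preserves mutual strong Birkhoff–James orthogonality in one direction. Then for all λ, μ ∈ ℂ with |λ| = |μ| and all indices 1 ≤ i, j ≤ k, one has |φ_i(λ)| = |φ_j(μ)|; moreover, if |λ| > |μ| then |φ_j(λ)| ≥ |φ_i(μ)| for all 1 ≤ i, j ≤ k. -/

import Mathlib

/-- `a` is strongly Birkhoff–James orthogonal to `b`. -/
def StrongBJ {𝔄 : Type*} [NormedRing 𝔄] (a b : 𝔄) : Prop :=
  ∀ c : 𝔄, ‖a‖ ≤ ‖a + b * c‖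

/-- `a` and `b` are mutually strongly Birkhoff–James orthogonal. -/
def MutualBJ {𝔄 : Type*} [NormedRing 𝔄] (a b : 𝔄) : Prop :=
  StrongBJ a b ∧ StrongBJ b a

theorem claimA19 {k : ℕ} (hk : 3 ≤ k) (φ : Fin k → ℂ → ℂ)
    (Φ : (Fin k → ℂ) → (Fin k → ℂ)) (hΦ : ∀ x i, Φ x i = φ i (x i))
    (hadd : ∀ x y, Φ (x + y) = Φ x + Φ y)
    (hpres : ∀ a b : Fin k → ℂ, MutualBJ a b → MutualBJ (Φ a) (Φ b))
    {q r : Fin k} (hqr : q ≠ r) {w w' : ℂ}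
    (hw : ‖w‖ ≤ ‖w'‖) :
    ‖φ q w‖ ≤ ‖φ r w'‖ := by
  have hΦ0 : Φ 0 = 0 := by
    have h := hadd 0 0
    rw [add_zero] at h
    exact (left_eq_add.mp h)
  have φ0 : ∀ i, φ i 0 = 0 := by
    intro i
    have h := hΦ 0 i
    rw [hΦ0] at h
    simpa using h.symm
  -- find p distinct from q and r
  obtain ⟨p, hpq, hpr⟩ : ∃ p : Fin k, p ≠ q ∧ p ≠ r := by
    have hcard : ({q, r}ᶜ : Finset (Fin k)).Nonempty := by
      rw [← Finset.card_pos, Finset.card_compl]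
      have h2 : ({q, r} : Finset (Fin k)).card ≤ 2 := by
        apply le_trans (Finset.card_insert_le _ _)
        simp
      have := Fintype.card_fin k
      omega
    obtain ⟨p, hp⟩ := hcard
    simp only [Finset.mem_compl, Finset.mem_insert, Finset.mem_singleton, not_or] at hp
    exact ⟨p, hp.1, hp.2⟩
  set a : Fin k → ℂ := fun i => if i = p then w else if i = q then w else 0 with ha
  set b : Fin k → ℂ := fun i => if i = q then w else if i = r then w' else 0 with hb
  have hab : MutualBJ a b := by
    constructor
    · intro c
      have h1 : ‖a‖ ≤ ‖w‖ := by
        rw [pi_norm_le_iff_of_nonneg (norm_nonneg w)]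
        intro i
        simp only [ha]
        split_ifs <;> simp
      have h2 : ‖w‖ ≤ ‖a + b * c‖ := by
        have hle := norm_le_pi_norm (a + b * c) p
        have hval : (a + b * c) p = w := by
          simp [ha, hb, hpq, hpr]
        rw [hval] at hle
        simpa using hle
      linarith
    · intro c
      have h1 : ‖b‖ ≤ ‖w'‖ := by
        rw [pi_norm_le_iff_of_nonneg (norm_nonneg w')]
        intro i
        simp only [hb]
        split_ifs <;> simp [hw]
      have h2 : ‖w'‖ ≤ ‖b + a * c‖ := by
        have hle := norm_le_pi_norm (b + a * c) r
        have hval : (b + a * c) r = w' := by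
          simp [ha, hb, hqr.symm, Ne.symm hpr]
        rw [hval] at hle
        simpa using hle
      linarith
  obtain ⟨-, hS⟩ := hpres a b hab
  set c : Fin k → ℂ := fun i => if i = q then -1 else 0 with hc
  have h1 : ‖φ q w‖ ≤ ‖Φ b‖ := by
    have hle := norm_le_pi_norm (Φ b) q
    rw [hΦ] at hle
    simpa [hb] using hle
  have h2 := hS c
  have h3 : ‖Φ b + Φ a * c‖ ≤ ‖φ r w'‖ := by
    rw [pi_norm_le_iff_of_nonneg (norm_nonneg _)]
    intro i
    have hval : (Φ b + Φ a * c) i = φ i (b i) + φ i (a i) * c i := by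
      simp [hΦ]
    rw [hval]
    by_cases hiq : i = q
    · subst hiq
      simp [ha, hb, hc, Ne.symm hpq]
    · by_cases hir : i = r
      · subst hir
        simp [ha, hb, hc, hiq, Ne.symm hpr]
      · simp [ha, hb, hc, hiq, hir, φ0]
  linarith

theorem stmt19 {k : ℕ} (hk : 3 ≤ k) (φ : Fin k → ℂ → ℂ)
    (Φ : (Fin k → ℂ) → (Fin k → ℂ)) (hΦ : ∀ x i, Φ x i = φ i (x i))
    (hadd : ∀ x y, Φ (x + y) = Φ x + Φ y)
    (hpres : ∀ a b : Fin k → ℂ, MutualBJ a b → MutualBJ (Φ a) (Φ b)) :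
    (∀ z w : ℂ, ‖z‖ = ‖w‖ →
      ∀ i j : Fin k, ‖φ i z‖ = ‖φ j w‖) ∧
    (∀ z w : ℂ, ‖w‖ < ‖z‖ →
      ∀ i j : Fin k, ‖φ i w‖ ≤ ‖φ j z‖) := by
  have A : ∀ (q r : Fin k), q ≠ r → ∀ w w' : ℂ,
      ‖w‖ ≤ ‖w'‖ → ‖φ q w‖ ≤ ‖φ r w'‖ :=
    fun q r hqr w w' hw => claimA19 hk φ Φ hΦ hadd hpres hqr hw
  have hex : ∀ i : Fin k, ∃ r : Fin k, r ≠ i := by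
    intro i
    apply Fintype.exists_ne_of_one_lt_card
    simp only [Fintype.card_fin]
    omega
  constructor
  · intro z w h i j
    by_cases hij : i = j
    · subst hij
      obtain ⟨r, hr⟩ := hex i
      apply le_antisymm
      · exact le_trans (A i r (Ne.symm hr) z w h.le) (A r i hr w w le_rfl)
      · exact le_trans (A i r (Ne.symm hr) w z h.ge) (A r i hr z z le_rfl)
    · exact le_antisymm (A i j hij z w h.le) (A j i (Ne.symm hij) w z h.ge)
  · intro z w h i j
    by_cases hij : i = j
    · subst hij
      obtain ⟨r, hr⟩ := hex i
      exact le_trans (A i r (Ne.symm hr) w w le_rfl) (A r i hr w z h.le)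
    · exact A i j hij w z h.le
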